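/- Let V be a real T×K matrix, S₁, S₂ K×K matrices, W₁ (R₁×K) and W₂ (R₂×K) isometric matrices, and set G := fromColumns (V*S₁*W₁ᵀ) (V*S₂*W₂ᵀ), a T×(R₁⊕R₂) matrix. Suppose the stacked matrix fromRows S₁ᵀ S₂ᵀ factors as P * Z with P an isometric (K⊕K)×L matrix and Z an L×K matrix. Then for every T×m matrix Q: ‖(1 − Q * Qᵀ) * G‖₂ = ‖(1 − Q * Qᵀ) * V * Zᵀ‖₂. -/

import Mathlib

open Matrix
open scoped Matrix.Norms.L2Operator

/-- For real matrices, conjugate transpose is the transpose. -/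
lemma real_conjTranspose_eq_transpose {α β : Type*} (A : Matrix α β ℝ) : Aᴴ = Aᵀ := by
  ext i j; simp [Matrix.conjTranspose_apply]

/-- Multiplying on the right by the transpose of an isometric matrix preserves
the L2 operator norm. -/
lemma l2_norm_mul_transpose_isometric {α β γ : Type*}
    [Fintype α] [DecidableEq α] [Fintype β] [DecidableEq β] [Fintype γ] [DecidableEq γ]
    (A : Matrix α β ℝ) (U : Matrix γ β ℝ) (hU : Uᵀ * U = 1) :
    ‖A * Uᵀ‖ = ‖A‖ := by
  have h0 : ‖A * Uᵀ‖ = ‖U * Aᵀ‖ := by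
    rw [← Matrix.l2_opNorm_conjTranspose (A * Uᵀ), real_conjTranspose_eq_transpose,
      Matrix.transpose_mul, Matrix.transpose_transpose]
  have key : ‖U * Aᵀ‖ * ‖U * Aᵀ‖ = ‖Aᵀ‖ * ‖Aᵀ‖ := by
    rw [← Matrix.l2_opNorm_conjTranspose_mul_self (U * Aᵀ),
        ← Matrix.l2_opNorm_conjTranspose_mul_self Aᵀ]
    congr 1
    rw [real_conjTranspose_eq_transpose, real_conjTranspose_eq_transpose,
      Matrix.transpose_mul, Matrix.transpose_transpose]
    calc A * Uᵀ * (U * Aᵀ) = A * (Uᵀ * U) * Aᵀ := by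
          rw [Matrix.mul_assoc, Matrix.mul_assoc, Matrix.mul_assoc]
      _ = A * Aᵀ := by rw [hU, Matrix.mul_one]
      _ = Aᵀᵀ * Aᵀ := by rw [Matrix.transpose_transpose]
  have hAt : ‖Aᵀ‖ = ‖A‖ := by
    rw [← Matrix.l2_opNorm_conjTranspose A, real_conjTranspose_eq_transpose]
  rw [h0, ← hAt]
  have h1 : 0 ≤ ‖U * Aᵀ‖ := norm_nonneg _
  have h2 : 0 ≤ ‖Aᵀ‖ := norm_nonneg _
  nlinarith

theorem stmt_15 {T R₁ R₂ K L m : Type*}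
    [Fintype T] [DecidableEq T] [Fintype R₁] [DecidableEq R₁]
    [Fintype R₂] [DecidableEq R₂] [Fintype K] [DecidableEq K]
    [Fintype L] [DecidableEq L] [Fintype m] [DecidableEq m]
    (V : Matrix T K ℝ) (S₁ S₂ : Matrix K K ℝ)
    (W₁ : Matrix R₁ K ℝ) (W₂ : Matrix R₂ K ℝ)
    (hW₁ : W₁ᵀ * W₁ = 1) (hW₂ : W₂ᵀ * W₂ = 1)
    (P : Matrix (K ⊕ K) L ℝ) (Z : Matrix L K ℝ)
    (hP : Pᵀ * P = 1)
    (hPZ : fromRows S₁ᵀ S₂ᵀ = P * Z) :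
    ∀ Q : Matrix T m ℝ,
      ‖(1 - Q * Qᵀ) * fromCols (V * S₁ * W₁ᵀ) (V * S₂ * W₂ᵀ)‖ =
        ‖(1 - Q * Qᵀ) * (V * Zᵀ)‖ := by
  intro Q
  set M : Matrix T T ℝ := 1 - Q * Qᵀ with hM
  set W : Matrix (R₁ ⊕ R₂) (K ⊕ K) ℝ := fromBlocks W₁ 0 0 W₂ with hWdef
  have hW : Wᵀ * W = 1 := by
    rw [hWdef, Matrix.fromBlocks_transpose, Matrix.fromBlocks_multiply]
    simp [hW₁, hW₂, Matrix.fromBlocks_one]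
  have hU : (W * P)ᵀ * (W * P) = 1 := by
    rw [Matrix.transpose_mul, Matrix.mul_assoc, ← Matrix.mul_assoc Wᵀ W P, hW,
      Matrix.one_mul, hP]
  have hS : fromCols S₁ S₂ = Zᵀ * Pᵀ := by
    have := congrArg Matrix.transpose hPZ
    rwa [Matrix.transpose_fromRows, Matrix.transpose_transpose, Matrix.transpose_transpose,
      Matrix.transpose_mul] at this
  have h1 : fromCols (V * S₁ * W₁ᵀ) (V * S₂ * W₂ᵀ)
      = V * (fromCols S₁ S₂ * Wᵀ) := by
    simp only [hWdef, Matrix.fromBlocks_transpose, Matrix.transpose_zero]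
    rw [show (fromCols S₁ S₂ * fromBlocks W₁ᵀ 0 0 W₂ᵀ : Matrix K (R₁ ⊕ R₂) ℝ)
        = fromCols (S₁ * W₁ᵀ) (S₂ * W₂ᵀ) by
      rw [Matrix.fromCols_mul_fromBlocks]; simp]
    rw [Matrix.mul_fromCols, Matrix.mul_assoc, Matrix.mul_assoc]
  have hG : M * fromCols (V * S₁ * W₁ᵀ) (V * S₂ * W₂ᵀ)
      = (M * (V * Zᵀ)) * (W * P)ᵀ := by
    rw [h1, hS, Matrix.transpose_mul]
    rw [Matrix.mul_assoc Zᵀ Pᵀ Wᵀ]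
    rw [← Matrix.mul_assoc V Zᵀ (Pᵀ * Wᵀ), ← Matrix.mul_assoc M (V * Zᵀ) (Pᵀ * Wᵀ),
      Matrix.mul_assoc]
  rw [hG]
  exact l2_norm_mul_transpose_isometric (M * (V * Zᵀ)) (W * P) hU
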